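/- If β_{jl} ≤ 0 for all j < l, then the Poisson auto-model conditional specification P(X_j = x | X_{−j}) = Poisson(μ_j) with μ_j = exp(α_j + Σ_{l≠j} β_{jl} x_l) admits a finite joint normalizing constant: Σ_{x∈ℕ^P} exp(Σ_j (α_j x_j − log x_j!) + Σ_{j<l} β_{jl} x_j x_l) < ∞. -/

import Mathlib

open scoped BigOperators

lemma summable_pi_prod : ∀ (n : ℕ) (f : Fin n → ℕ → ℝ),
    (∀ j k, 0 ≤ f j k) → (∀ j, Summable (f j)) →
    Summable (fun x : Fin n → ℕ => ∏ j, f j (x j)) := by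
  intro n
  induction n with
  | zero => intro f _ _; exact .of_finite
  | succ n ih =>
    intro f hpos hs
    have h2 := (hs 0).mul_of_nonneg
      (ih (fun j => f j.succ) (fun j k => hpos j.succ k) (fun j => hs j.succ))
      (fun k => hpos 0 k)
      (fun x => Finset.prod_nonneg fun j _ => hpos j.succ (x j))
    have := ((Fin.consEquiv (fun _ : Fin (n + 1) => ℕ)).symm.summable_iff
      (f := fun p : ℕ × (Fin n → ℕ) => f 0 p.1 * ∏ j, f j.succ (p.2 j))).2 h2
    simpa [Fin.prod_univ_succ, Function.comp_def, Fin.consEquiv, Fin.tail] using this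

theorem stmt13 (P : ℕ) (α : Fin P → ℝ) (β : Fin P → Fin P → ℝ)
    (hβ : ∀ j l : Fin P, j < l → β j l ≤ 0) :
    Summable (fun x : Fin P → ℕ =>
      Real.exp ((∑ j, (α j * (x j : ℝ) - Real.log (Nat.factorial (x j))))
        + ∑ j, ∑ l, if j < l then β j l * (x j : ℝ) * (x l : ℝ) else 0)) := by
  have hsum : Summable (fun x : Fin P → ℕ =>
      ∏ j, Real.exp (α j) ^ (x j) / (Nat.factorial (x j) : ℝ)) := by
    exact summable_pi_prod P (fun j k => Real.exp (α j) ^ k / (Nat.factorial k : ℝ))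
      (fun j k => by positivity) (fun j => Real.summable_pow_div_factorial _)
  apply Summable.of_nonneg_of_le (fun x => (Real.exp_pos _).le) _ hsum
  intro x
  have hB : (∑ j, ∑ l, if j < l then β j l * (x j : ℝ) * (x l : ℝ) else 0) ≤ 0 := by
    apply Finset.sum_nonpos; intro j _
    apply Finset.sum_nonpos; intro l _
    by_cases h : j < l
    · simp only [h, if_true]
      have := hβ j l h
      have h1 : (0:ℝ) ≤ (x j : ℝ) * (x l : ℝ) := by positivity
      calc β j l * (x j : ℝ) * (x l : ℝ) = β j l * ((x j : ℝ) * (x l : ℝ)) := by ring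
        _ ≤ 0 := mul_nonpos_of_nonpos_of_nonneg this h1
    · simp [h]
  calc Real.exp ((∑ j, (α j * (x j : ℝ) - Real.log (Nat.factorial (x j)))) + _)
      ≤ Real.exp (∑ j, (α j * (x j : ℝ) - Real.log (Nat.factorial (x j)))) := by
        apply Real.exp_le_exp.2; linarith
    _ = ∏ j, Real.exp (α j * (x j : ℝ) - Real.log (Nat.factorial (x j))) := by
        rw [Real.exp_sum]
    _ = ∏ j, Real.exp (α j) ^ (x j) / (Nat.factorial (x j) : ℝ) := by
        apply Finset.prod_congr rfl
        intro j _
        rw [Real.exp_sub, Real.exp_log (by positivity), ← Real.exp_nat_mul, mul_comm]
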